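/- Every non-generic super skew diagram λ/μ is related to a unique generic super skew diagram, where λ'/μ' is related to λ/μ if there is a finite chain of diagrams starting at λ/μ, ending at λ'/μ', each closely related to the previous one, and λ'/μ' is generic. -/

import Mathlib

/-- A skew diagram: a finite subset of `ℤ × ℤ_{>0}` such that if nonempty it meets column 1,
and satisfying the convexity condition. -/
def IsSkewDiagram (D : Finset (ℤ × ℤ)) : Prop :=
  (∀ p ∈ D, 1 ≤ p.2) ∧
  (D.Nonempty → ∃ i : ℤ, (i, 1) ∈ D) ∧
  (∀ i j : ℤ, (i, j) ∉ D →
    (∀ i' j' : ℤ, i ≤ i' → j ≤ j' → (i', j') ∉ D) ∨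
    (∀ i' j' : ℤ, i' ≤ i → j' ≤ j → (i', j') ∉ D))

/-- The number of rows shared by columns `j` and `j+1` of `D`. -/
def sharedCard (D : Finset (ℤ × ℤ)) (j : ℤ) : ℕ :=
  (D.filter (fun b => b.2 = j ∧ (b.1, j + 1) ∈ D)).card

/-- A super skew diagram: adjacent columns share at most `2N` rows. -/
def IsSuper (N : ℕ) (D : Finset (ℤ × ℤ)) : Prop := ∀ j : ℤ, sharedCard D j ≤ 2 * N

/-- A generic (super) skew diagram: adjacent columns share fewer than `2N` rows. -/
def IsGeneric (N : ℕ) (D : Finset (ℤ × ℤ)) : Prop := ∀ j : ℤ, sharedCard D j < 2 * N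

/-- The set of row indices of the boxes in column `j`. -/
def col (D : Finset (ℤ × ℤ)) (j : ℤ) : Finset ℤ := (D.filter (fun b => b.2 = j)).image Prod.fst

/-- The top box `t_j` of column `j` (junk value `0` if the column is empty). -/
def topBox (D : Finset (ℤ × ℤ)) (j : ℤ) : ℤ := (col D j).min.untopD 0

/-- The length `l_j` of column `j`. -/
def colLen (D : Finset (ℤ × ℤ)) (j : ℤ) : ℕ := (col D j).card

/-- The closely-related diagram `λ'/μ'`:
`{(i,j) ∈ D : j ≤ j'} ∪ {(t_{j'} - r, j') : 1 ≤ r ≤ l_{j'+1} - 2N + 1}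
∪ {(i-1, j-1) : (i,j) ∈ D, j > j'+1}`. -/
def surgery (N : ℕ) (D : Finset (ℤ × ℤ)) (j' : ℤ) : Finset (ℤ × ℤ) :=
  (D.filter (fun b => b.2 ≤ j')) ∪
    ((Finset.Icc 1 (colLen D (j' + 1) - 2 * N + 1)).image
      (fun r : ℕ => (topBox D j' - (r : ℤ), j'))) ∪
    ((D.filter (fun b => j' + 1 < b.2)).image (fun b => (b.1 - 1, b.2 - 1)))

/-- The finset of non-generic columns of `D`. -/
def nonGenCols (N : ℕ) (D : Finset (ℤ × ℤ)) : Finset ℤ :=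
  (D.image Prod.snd).filter (fun j => sharedCard D j = 2 * N)

/-- `E` is closely related to `D`: `E` is obtained from the super skew diagram `D` by the
surgery at the largest non-generic column `j'`. -/
def CloselyRelated (N : ℕ) (D E : Finset (ℤ × ℤ)) : Prop :=
  IsSkewDiagram D ∧ IsSuper N D ∧
  ∃ j' : ℤ, sharedCard D j' = 2 * N ∧ (∀ j : ℤ, j' < j → sharedCard D j < 2 * N) ∧
    E = surgery N D j'

open Finset Relation

lemma mem_col {D : Finset (ℤ × ℤ)} {i j : ℤ} : i ∈ col D j ↔ (i, j) ∈ D := by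
  simp only [col, Finset.mem_image, Finset.mem_filter]
  constructor
  · rintro ⟨⟨a, b⟩, ⟨hab, rfl⟩, rfl⟩; exact hab
  · intro h; exact ⟨(i, j), ⟨h, rfl⟩, rfl⟩

lemma skew_convex {D : Finset (ℤ × ℤ)} (hD : IsSkewDiagram D) {i1 j1 i2 j2 i j : ℤ}
    (h1 : (i1, j1) ∈ D) (h2 : (i2, j2) ∈ D) (hi1 : i1 ≤ i) (hi2 : i ≤ i2)
    (hj1 : j1 ≤ j) (hj2 : j ≤ j2) : (i, j) ∈ D := by
  by_contra hc
  rcases hD.2.2 i j hc with h | h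
  · exact h i2 j2 hi2 hj2 h2
  · exact h i1 j1 hi1 hj1 h1

lemma sharedCard_eq_card_inter (D : Finset (ℤ × ℤ)) (j : ℤ) :
    sharedCard D j = (col D j ∩ col D (j + 1)).card := by
  rw [sharedCard]
  have himg : (D.filter (fun b => b.2 = j ∧ (b.1, j + 1) ∈ D)).image Prod.fst
      = col D j ∩ col D (j + 1) := by
    ext i
    simp only [Finset.mem_image, Finset.mem_filter, Finset.mem_inter, mem_col]
    constructor
    · rintro ⟨⟨a, b⟩, ⟨hab, rfl, h2⟩, rfl⟩; exact ⟨hab, h2⟩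
    · rintro ⟨h1, h2⟩; exact ⟨(i, j), ⟨h1, rfl, h2⟩, rfl⟩
  rw [← himg]
  rw [Finset.card_image_of_injOn]
  intro a ha b hb hab
  simp only [Finset.coe_filter, Set.mem_setOf_eq] at ha hb
  exact Prod.ext hab (ha.2.1.trans hb.2.1.symm)

lemma key (N : ℕ) (hN : 1 ≤ N) (D : Finset (ℤ × ℤ)) (hD : IsSkewDiagram D)
    (hsuper : IsSuper N D) (j' : ℤ) (hj' : sharedCard D j' = 2 * N)
    (hmax : ∀ j : ℤ, j' < j → sharedCard D j < 2 * N) :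
    IsSkewDiagram (surgery N D j') ∧ IsSuper N (surgery N D j') ∧
      (nonGenCols N (surgery N D j')).card < (nonGenCols N D).card := by
  set E := surgery N D j' with hE
  have hpos : 0 < (col D j' ∩ col D (j' + 1)).card := by
    rw [← sharedCard_eq_card_inter, hj']; omega
  obtain ⟨i0, hi0⟩ := Finset.card_pos.mp hpos
  have hi00 : i0 ∈ col D j' := (Finset.mem_inter.mp hi0).1
  have hi01 : i0 ∈ col D (j' + 1) := (Finset.mem_inter.mp hi0).2
  have hne0 : (col D j').Nonempty := ⟨i0, hi00⟩
  have hne1 : (col D (j' + 1)).Nonempty := ⟨i0, hi01⟩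
  set t0 := (col D j').min' hne0 with ht0
  set b0 := (col D j').max' hne0 with hb0
  set t1 := (col D (j' + 1)).min' hne1 with ht1
  set b1 := (col D (j' + 1)).max' hne1 with hb1
  have ht0mem : (t0, j') ∈ D := mem_col.mp ((col D j').min'_mem hne0)
  have hb0mem : (b0, j') ∈ D := mem_col.mp ((col D j').max'_mem hne0)
  have ht1mem : (t1, j' + 1) ∈ D := mem_col.mp ((col D (j' + 1)).min'_mem hne1)
  have hb1mem : (b1, j' + 1) ∈ D := mem_col.mp ((col D (j' + 1)).max'_mem hne1)
  have ht0b0 : t0 ≤ b0 := (col D j').min'_le b0 ((col D j').max'_mem hne0)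
  have ht1b1 : t1 ≤ b1 := (col D (j' + 1)).min'_le b1 ((col D (j' + 1)).max'_mem hne1)
  have hcol0 : col D j' = Finset.Icc t0 b0 := by
    ext i
    simp only [Finset.mem_Icc]
    constructor
    · intro hi; exact ⟨(col D j').min'_le i hi, (col D j').le_max' i hi⟩
    · rintro ⟨h1, h2⟩
      exact mem_col.mpr (skew_convex hD ht0mem hb0mem h1 h2 le_rfl le_rfl)
  have hcol1 : col D (j' + 1) = Finset.Icc t1 b1 := by
    ext i
    simp only [Finset.mem_Icc]
    constructor
    · intro hi; exact ⟨(col D (j' + 1)).min'_le i hi, (col D (j' + 1)).le_max' i hi⟩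
    · rintro ⟨h1, h2⟩
      exact mem_col.mpr (skew_convex hD ht1mem hb1mem h1 h2 le_rfl le_rfl)
  have F1 : ∀ i j : ℤ, (i, j) ∈ D → j ≤ j' → t0 ≤ i := by
    intro i j hmem hle
    by_contra hcon
    push_neg at hcon
    have : (i, j') ∈ D := skew_convex hD hmem hb0mem le_rfl (by omega) hle le_rfl
    have := (col D j').min'_le i (mem_col.mpr this)
    omega
  have F2 : ∀ i j : ℤ, (i, j) ∈ D → j' + 1 ≤ j → i ≤ b1 := by
    intro i j hmem hle
    by_contra hcon
    push_neg at hcon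
    have : (i, j' + 1) ∈ D := skew_convex hD ht1mem hmem (by omega) le_rfl le_rfl hle
    have := (col D (j' + 1)).le_max' i (mem_col.mpr this)
    omega
  have ht0i0 : t0 ≤ i0 := (col D j').min'_le i0 hi00
  have hi0b1 : i0 ≤ b1 := (col D (j' + 1)).le_max' i0 hi01
  have ht0b1 : t0 ≤ b1 := le_trans ht0i0 hi0b1
  have ht1t0 : t1 ≤ t0 := by
    have : (t0, j' + 1) ∈ D :=
      skew_convex hD ht0mem (mem_col.mp hi01) le_rfl ht0i0 (by omega) le_rfl
    exact (col D (j' + 1)).min'_le t0 (mem_col.mpr this)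
  have hb1b0 : b1 ≤ b0 := by
    have : (b1, j') ∈ D :=
      skew_convex hD (mem_col.mp hi00) hb1mem hi0b1 le_rfl le_rfl (by omega)
    exact (col D j').le_max' b1 (mem_col.mpr this)
  have hint : col D j' ∩ col D (j' + 1) = Finset.Icc t0 b1 := by
    ext i
    simp only [Finset.mem_inter, hcol0, hcol1, Finset.mem_Icc]
    omega
  have hcard : b1 = t0 + 2 * N - 1 := by
    rw [sharedCard_eq_card_inter, hint, Int.card_Icc] at hj'
    omega
  have hl1 : (colLen D (j' + 1) : ℤ) = b1 - t1 + 1 := by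
    rw [colLen, hcol1, Int.card_Icc]
    omega
  have hA : ((colLen D (j' + 1) - 2 * N + 1 : ℕ) : ℤ) = t0 - t1 + 1 := by
    omega
  have htop : topBox D j' = t0 := by
    rw [topBox, ← Finset.coe_min' hne0, WithTop.untopD_coe]
  have hj'1 : 1 ≤ j' := hD.1 (t0, j') ht0mem
  have hM : ∀ i j : ℤ, ((i, j) ∈ E ↔
      ((j < j' ∧ (i, j) ∈ D) ∨ (j = j' ∧ t1 - 1 ≤ i ∧ i ≤ b0) ∨
        (j' < j ∧ (i + 1, j + 1) ∈ D))) := by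
    intro i j
    rw [hE, surgery]
    simp only [Finset.mem_union, Finset.mem_filter, Finset.mem_image, Finset.mem_Icc,
      Prod.mk.injEq, htop]
    constructor
    · rintro ((⟨hmem, hle⟩ | ⟨r, ⟨hr1, hr2⟩, hie, hje⟩) | ⟨⟨a, c⟩, ⟨hmem, hlt⟩, ha, hc⟩)
      · rcases lt_or_eq_of_le hle with h | h
        · exact Or.inl ⟨h, hmem⟩
        · subst h
          have hi := mem_col.mpr hmem
          rw [hcol0, Finset.mem_Icc] at hi
          exact Or.inr (Or.inl ⟨rfl, by omega, hi.2⟩)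
      · subst hje
        exact Or.inr (Or.inl ⟨rfl, by omega, by omega⟩)
      · obtain rfl : a = i + 1 := by omega
        obtain rfl : c = j + 1 := by omega
        exact Or.inr (Or.inr ⟨by omega, hmem⟩)
    · rintro (⟨hlt, hmem⟩ | ⟨rfl, h1, h2⟩ | ⟨hlt, hmem⟩)
      · exact Or.inl (Or.inl ⟨hmem, le_of_lt hlt⟩)
      · by_cases hge : t0 ≤ i
        · refine Or.inl (Or.inl ⟨?_, le_rfl⟩)
          exact mem_col.mp (by rw [hcol0]; exact Finset.mem_Icc.mpr ⟨hge, h2⟩)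
        · exact Or.inl (Or.inr ⟨(t0 - i).toNat, ⟨by omega, by omega⟩, by omega, by omega⟩)
      · exact Or.inr ⟨(i + 1, j + 1), ⟨hmem, by omega⟩, by omega, by omega⟩
  have hcolE_lt : ∀ j : ℤ, j < j' → col E j = col D j := by
    intro j hj
    ext i
    rw [mem_col, mem_col, hM]
    constructor
    · rintro (⟨_, h⟩ | ⟨rfl, _⟩ | ⟨h, _⟩)
      · exact h
      · exact absurd hj (lt_irrefl _)
      · exact absurd hj (by omega)
    · intro h; exact Or.inl ⟨hj, h⟩
  have hcolE_eq : col E j' = Finset.Icc (t1 - 1) b0 := by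
    ext i
    rw [mem_col, hM, Finset.mem_Icc]
    constructor
    · rintro (⟨h, _⟩ | ⟨_, h1, h2⟩ | ⟨h, _⟩)
      · exact absurd h (lt_irrefl _)
      · exact ⟨h1, h2⟩
      · exact absurd h (lt_irrefl _)
    · intro h; exact Or.inr (Or.inl ⟨rfl, h.1, h.2⟩)
  have hcolE_gt : ∀ j : ℤ, j' < j → col E j = (col D (j + 1)).image (fun i => i - 1) := by
    intro j hj
    ext i
    rw [mem_col, hM]
    simp only [Finset.mem_image, mem_col]
    constructor
    · rintro (⟨h, _⟩ | ⟨rfl, _⟩ | ⟨_, h⟩)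
      · exact absurd hj (by omega)
      · exact absurd hj (lt_irrefl _)
      · exact ⟨i + 1, h, by omega⟩
    · rintro ⟨a, ha, rfl⟩
      exact Or.inr (Or.inr ⟨hj, by rw [show a - 1 + 1 = a by omega]; exact ha⟩)
  have hEconv : ∀ i1 j1 i2 j2 i j : ℤ, (i1, j1) ∈ E → (i2, j2) ∈ E →
      i1 ≤ i → i ≤ i2 → j1 ≤ j → j ≤ j2 → (i, j) ∈ E := by
    intro i1 j1 i2 j2 i j h1 h2 hi1 hi2 hj1 hj2
    rw [hM] at h1 h2 ⊢
    rcases h1 with ⟨hj1', h1⟩ | ⟨hj1e, h1a, h1b⟩ | ⟨hj1', h1⟩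
    · rcases h2 with ⟨hj2', h2⟩ | ⟨hj2e, h2a, h2b⟩ | ⟨hj2', h2⟩
      · exact Or.inl ⟨by omega, skew_convex hD h1 h2 hi1 hi2 hj1 hj2⟩
      · have hj2'' : j ≤ j' := by omega
        rcases lt_or_eq_of_le hj2'' with hjlt | heq
        · rcases le_or_gt i b1 with hib | hib
          · exact Or.inl ⟨hjlt, skew_convex hD h1 hb1mem hi1 hib hj1 (by omega)⟩
          · have h2' : (i2, j') ∈ D := mem_col.mp
              (by rw [hcol0]; exact Finset.mem_Icc.mpr ⟨by omega, by omega⟩)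
            exact Or.inl ⟨hjlt, skew_convex hD h1 h2' hi1 hi2 hj1 (by omega)⟩
        · have := F1 i1 j1 h1 (by omega)
          exact Or.inr (Or.inl ⟨heq, by omega, by omega⟩)
      · rcases lt_trichotomy j j' with hj | heq | hj
        · exact Or.inl ⟨hj, skew_convex hD h1 h2 hi1 (by omega) hj1 (by omega)⟩
        · have ht := F1 i1 j1 h1 (by omega)
          have hb := F2 (i2 + 1) (j2 + 1) h2 (by omega)
          exact Or.inr (Or.inl ⟨heq, by omega, by omega⟩)
        · exact Or.inr (Or.inr ⟨hj,
            skew_convex hD h1 h2 (by omega) (by omega) (by omega) (by omega)⟩)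
    · rcases h2 with ⟨hj2', h2⟩ | ⟨hj2e, h2a, h2b⟩ | ⟨hj2', h2⟩
      · exact absurd hj2' (by omega)
      · exact Or.inr (Or.inl ⟨by omega, by omega, by omega⟩)
      · rcases lt_or_eq_of_le (show j' ≤ j by omega) with hjlt | heq
        · exact Or.inr (Or.inr ⟨hjlt, skew_convex hD ht1mem h2
            (by omega) (by omega) (by omega) (by omega)⟩)
        · have hb := F2 (i2 + 1) (j2 + 1) h2 (by omega)
          exact Or.inr (Or.inl ⟨heq.symm, by omega, by omega⟩)
    · rcases h2 with ⟨hj2', h2⟩ | ⟨hj2e, h2a, h2b⟩ | ⟨hj2', h2⟩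
      · exact absurd hj2' (by omega)
      · exact absurd hj2e (by omega)
      · exact Or.inr (Or.inr ⟨by omega,
          skew_convex hD h1 h2 (by omega) (by omega) (by omega) (by omega)⟩)
  have hEskew : IsSkewDiagram E := by
    refine ⟨?_, ?_, ?_⟩
    · rintro ⟨i, j⟩ hp
      rcases (hM i j).mp hp with ⟨_, h⟩ | ⟨he, _⟩ | ⟨h, _⟩
      · exact hD.1 _ h
      · show (1 : ℤ) ≤ j; omega
      · show (1 : ℤ) ≤ j; omega
    · intro _
      rcases lt_or_eq_of_le hj'1 with h | h
      · obtain ⟨x, hx⟩ := hD.2.1 ⟨(t0, j'), ht0mem⟩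
        exact ⟨x, (hM x 1).mpr (Or.inl ⟨h, hx⟩)⟩
      · exact ⟨t0, (hM t0 1).mpr (Or.inr (Or.inl ⟨h, by omega, ht0b0⟩))⟩
    · intro i j hc
      by_contra hcon
      push_neg at hcon
      obtain ⟨⟨i2, j2, hi2, hj2, h2⟩, i1, j1, hi1, hj1, h1⟩ := hcon
      exact hc (hEconv i1 j1 i2 j2 i j h1 h2 hi1 hi2 hj1 hj2)
  have hs_lt : ∀ j : ℤ, j < j' → sharedCard E j = sharedCard D j := by
    intro j hj
    rw [sharedCard_eq_card_inter, sharedCard_eq_card_inter]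
    congr 1
    rcases lt_or_eq_of_le (show j + 1 ≤ j' by omega) with h | h
    · rw [hcolE_lt j hj, hcolE_lt (j + 1) h]
    · rw [hcolE_lt j hj, h, hcolE_eq, hcol0]
      ext x
      simp only [Finset.mem_inter, Finset.mem_Icc, mem_col]
      constructor
      · rintro ⟨hx, h1, h2⟩
        exact ⟨hx, F1 x j hx (by omega), h2⟩
      · rintro ⟨hx, h1, h2⟩
        exact ⟨hx, by omega, h2⟩
  have hs_eq : sharedCard E j' < 2 * N := by
    have hle : (col E j' ∩ col E (j' + 1)).card ≤ sharedCard D (j' + 1) := by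
      rw [sharedCard_eq_card_inter]
      apply Finset.card_le_card_of_injOn (fun x => x + 1)
      · intro x hx
        rw [hcolE_eq, hcolE_gt (j' + 1) (by omega)] at hx
        simp only [Finset.mem_coe, Finset.mem_inter, Finset.mem_Icc, Finset.mem_image] at hx
        obtain ⟨⟨hx1, hx2⟩, a, ha, hae⟩ := hx
        obtain rfl : a = x + 1 := by omega
        have hb := F2 (x + 1) (j' + 1 + 1) (mem_col.mp ha) (by omega)
        refine Finset.mem_inter.mpr ⟨?_, ha⟩
        rw [hcol1, Finset.mem_Icc]
        exact ⟨by beta_reduce; omega, hb⟩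
      · intro a _ b _ h
        simpa using h
    have := hmax (j' + 1) (by omega)
    rw [sharedCard_eq_card_inter]
    omega
  have hs_gt : ∀ j : ℤ, j' < j → sharedCard E j = sharedCard D (j + 1) := by
    intro j hj
    rw [sharedCard_eq_card_inter, sharedCard_eq_card_inter]
    have hinj : Function.Injective (fun i : ℤ => i - 1) := fun a b h => by
      simpa using h
    rw [hcolE_gt j hj, hcolE_gt (j + 1) (by omega),
      ← Finset.image_inter _ _ hinj, Finset.card_image_of_injective _ hinj]
  have hEsuper : IsSuper N E := by
    intro j
    rcases lt_trichotomy j j' with h | h | h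
    · rw [hs_lt j h]; exact hsuper j
    · rw [h]; exact le_of_lt hs_eq
    · rw [hs_gt j h]; exact le_of_lt (hmax (j + 1) (by omega))
  have hsubset : nonGenCols N E ⊆ nonGenCols N D := by
    intro j hj
    simp only [nonGenCols, Finset.mem_filter, Finset.mem_image] at hj ⊢
    obtain ⟨-, hjs⟩ := hj
    rcases lt_trichotomy j j' with h | h | h
    · rw [hs_lt j h] at hjs
      have hpos2 : 0 < (col D j ∩ col D (j + 1)).card := by
        rw [← sharedCard_eq_card_inter, hjs]; omega
      obtain ⟨x, hx⟩ := Finset.card_pos.mp hpos2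
      exact ⟨⟨(x, j), mem_col.mp (Finset.mem_inter.mp hx).1, rfl⟩, hjs⟩
    · rw [h] at hjs
      exact absurd hjs (by omega)
    · rw [hs_gt j h] at hjs
      have := hmax (j + 1) (by omega)
      exact absurd hjs (by omega)
  have hmemD : j' ∈ nonGenCols N D := by
    simp only [nonGenCols, Finset.mem_filter, Finset.mem_image]
    exact ⟨⟨(t0, j'), ht0mem, rfl⟩, hj'⟩
  have hmemE : j' ∉ nonGenCols N E := by
    simp only [nonGenCols, Finset.mem_filter, Finset.mem_image, not_and]
    intro _
    omega
  refine ⟨hEskew, hEsuper, Finset.card_lt_card ?_⟩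
  exact (Finset.ssubset_iff_of_subset hsubset).mpr ⟨j', hmemD, hmemE⟩

lemma det {N : ℕ} {D E E' : Finset (ℤ × ℤ)} (h : CloselyRelated N D E)
    (h' : CloselyRelated N D E') : E = E' := by
  obtain ⟨_, _, j1, h1, hm1, rfl⟩ := h
  obtain ⟨_, _, j2, h2, hm2, rfl⟩ := h'
  obtain rfl : j1 = j2 := by
    rcases lt_trichotomy j1 j2 with h | h | h
    · exact absurd h2 (by have := hm1 j2 h; omega)
    · exact h
    · exact absurd h1 (by have := hm2 j1 h; omega)
  rfl

lemma no_step {N : ℕ} {D E : Finset (ℤ × ℤ)} (hg : IsGeneric N D) :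
    ¬ CloselyRelated N D E := by
  rintro ⟨_, _, j1, h1, -, -⟩
  have := hg j1
  omega

lemma unique_endpoint {N : ℕ} {D E1 : Finset (ℤ × ℤ)}
    (h1 : Relation.ReflTransGen (CloselyRelated N) D E1) (g1 : IsGeneric N E1) :
    ∀ E2, Relation.ReflTransGen (CloselyRelated N) D E2 → IsGeneric N E2 → E1 = E2 := by
  induction h1 using Relation.ReflTransGen.head_induction_on with
  | refl =>
    intro E2 h2 g2
    rcases h2.cases_head with rfl | ⟨c, hc, -⟩
    · rfl
    · exact absurd hc (no_step g1)
  | head hac hcb ih =>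
    intro E2 h2 g2
    rcases h2.cases_head with rfl | ⟨c2, hc2, h2'⟩
    · exact absurd hac (no_step g2)
    · exact ih E2 (by rw [det hac hc2]; exact h2') g2

lemma exists_max_nongen {N : ℕ} (hN : 1 ≤ N) {D : Finset (ℤ × ℤ)} (hsuper : IsSuper N D)
    (hng : ¬ IsGeneric N D) :
    ∃ j' : ℤ, j' ∈ nonGenCols N D ∧ sharedCard D j' = 2 * N ∧
      ∀ j : ℤ, j' < j → sharedCard D j < 2 * N := by
  rw [IsGeneric] at hng
  push_neg at hng
  obtain ⟨j0, hj0⟩ := hng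
  have hj0' : sharedCard D j0 = 2 * N := le_antisymm (hsuper j0) hj0
  have hmem : ∀ j : ℤ, sharedCard D j = 2 * N → j ∈ nonGenCols N D := by
    intro j hj
    simp only [nonGenCols, Finset.mem_filter, Finset.mem_image]
    refine ⟨?_, hj⟩
    have hpos : 0 < sharedCard D j := by omega
    rw [sharedCard_eq_card_inter] at hpos
    obtain ⟨x, hx⟩ := Finset.card_pos.mp hpos
    exact ⟨(x, j), mem_col.mp (Finset.mem_inter.mp hx).1, rfl⟩
  have hne : (nonGenCols N D).Nonempty := ⟨j0, hmem j0 hj0'⟩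
  refine ⟨(nonGenCols N D).max' hne, (nonGenCols N D).max'_mem hne, ?_, ?_⟩
  · have := (nonGenCols N D).max'_mem hne
    simp only [nonGenCols, Finset.mem_filter] at this
    exact this.2
  · intro j hj
    rcases lt_or_eq_of_le (hsuper j) with h | h
    · exact h
    · exact absurd ((nonGenCols N D).le_max' j (hmem j h)) (by omega)

lemma exists_generic (N : ℕ) (hN : 1 ≤ N) : ∀ n : ℕ, ∀ D : Finset (ℤ × ℤ),
    (nonGenCols N D).card ≤ n → IsSkewDiagram D → IsSuper N D →
    ∃ E, Relation.ReflTransGen (CloselyRelated N) D E ∧ IsGeneric N E := by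
  intro n
  induction n with
  | zero =>
    intro D hcard hD hsuper
    by_cases hg : IsGeneric N D
    · exact ⟨D, Relation.ReflTransGen.refl, hg⟩
    · obtain ⟨j', hmem, -, -⟩ := exists_max_nongen hN hsuper hg
      exact absurd (Finset.card_pos.mpr ⟨j', hmem⟩) (by omega)
  | succ n ih =>
    intro D hcard hD hsuper
    by_cases hg : IsGeneric N D
    · exact ⟨D, Relation.ReflTransGen.refl, hg⟩
    · obtain ⟨j', hmemng, hj', hmax⟩ := exists_max_nongen hN hsuper hg
      obtain ⟨hskew, hsup, hlt⟩ := key N hN D hD hsuper j' hj' hmax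
      obtain ⟨E, hchain, hgen⟩ := ih (surgery N D j') (by omega) hskew hsup
      exact ⟨E, Relation.ReflTransGen.head ⟨hD, hsuper, j', hj', hmax, rfl⟩ hchain, hgen⟩

/-- Every non-generic super skew diagram is related to a unique generic super skew diagram. -/
theorem stmt17 (N : ℕ) (hN : 1 ≤ N) (D : Finset (ℤ × ℤ)) (hD : IsSkewDiagram D)
    (hsuper : IsSuper N D) (hng : ¬ IsGeneric N D) :
    ∃! E : Finset (ℤ × ℤ),
      Relation.ReflTransGen (CloselyRelated N) D E ∧ IsGeneric N E := by
  obtain ⟨E, hchain, hgen⟩ := exists_generic N hN (nonGenCols N D).card D le_rfl hD hsuper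
  refine ⟨E, ⟨hchain, hgen⟩, ?_⟩
  rintro E' ⟨hchain', hgen'⟩
  exact unique_endpoint hchain' hgen' E hchain hgen
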